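/- For m, n ≥ 2 and each j = 1, ..., n-1, the value m + 2 - 2cos(πj/n) is a Laplacian eigenvalue of NC(F_{m,n}) with multiplicity at least 2: if v is an eigenvector of L(P_n) for eigenvalue 2 - 2cos(πj/n), then (v, 0, 0, 0) and (0, 0, 0, v) are eigenvectors of L(NC(F_{m,n})) for eigenvalue m + 2 - 2cos(πj/n). -/
import Mathlib


open scoped Classical
open Matrix

/-- The Laplacian matrix of the path graph `P_n`. -/
noncomputable def lapP (n : ℕ) : Matrix (Fin n) (Fin n) ℝ :=
  (SimpleGraph.pathGraph n).lapMatrix ℝ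

/-- The all-ones matrix. -/
def JJ (a b : ℕ) : Matrix (Fin a) (Fin b) ℝ := Matrix.of fun _ _ => 1

/-- The Laplacian matrix of the graph `NC(F_{m,n})`, obtained from two disjoint copies of the
generalized fan graph `F_{m,n} = K̄_m + P_n` by adding a perfect matching between the
corresponding `m` center vertices.  Vertex order: first path, first centers, second centers,
second path. -/
noncomputable def lapNC (m n : ℕ) :
    Matrix ((Fin n ⊕ Fin m) ⊕ (Fin m ⊕ Fin n)) ((Fin n ⊕ Fin m) ⊕ (Fin m ⊕ Fin n)) ℝ :=
  Matrix.fromBlocks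
    (Matrix.fromBlocks (lapP n + (m : ℝ) • 1) (-JJ n m) (-JJ m n) (((n : ℝ) + 1) • 1))
    (Matrix.fromBlocks 0 0 (-1) 0)
    (Matrix.fromBlocks 0 (-1) 0 0)
    (Matrix.fromBlocks (((n : ℝ) + 1) • 1) (-JJ m n) (-JJ n m) (lapP n + (m : ℝ) • 1))

lemma sum_eigvec_zero (n : ℕ) (v : Fin n → ℝ) (lam : ℝ) (hlam : lam ≠ 0)
    (hev : lapP n *ᵥ v = lam • v) : ∑ i, v i = 0 := by
  have hcol : ∀ k, ∑ i, lapP n i k = 0 := by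
    intro k
    have h1 := congrFun (SimpleGraph.lapMatrix_mulVec_const_eq_zero (R := ℝ)
      (G := SimpleGraph.pathGraph n)) k
    simp only [mulVec, dotProduct, mul_one] at h1
    calc ∑ i, lapP n i k = ∑ i, lapP n k i := by
          refine Finset.sum_congr rfl fun i _ => ?_
          have := (SimpleGraph.isSymm_lapMatrix (G := SimpleGraph.pathGraph n) (R := ℝ))
          simpa [lapP, Matrix.transpose_apply] using (congrFun (congrFun this k) i)
      _ = 0 := h1
  have h2 : ∑ i, (lapP n *ᵥ v) i = 0 := by
    simp only [mulVec, dotProduct]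
    rw [Finset.sum_comm]
    simp_rw [← Finset.sum_mul]
    simp [hcol]
  rw [hev] at h2
  simp only [Pi.smul_apply, smul_eq_mul, ← Finset.mul_sum] at h2
  exact (mul_eq_zero.mp h2).resolve_left hlam

theorem lapNC_eigenvalue_path (m n j : ℕ) (hm : 2 ≤ m) (hn : 2 ≤ n)
    (hj1 : 1 ≤ j) (hjn : j ≤ n - 1) (v : Fin n → ℝ) (hv : v ≠ 0)
    (hev : lapP n *ᵥ v = (2 - 2 * Real.cos (Real.pi * j / n)) • v) :
    (lapNC m n *ᵥ Sum.elim (Sum.elim v (0 : Fin m → ℝ)) (Sum.elim (0 : Fin m → ℝ) (0 : Fin n → ℝ)) =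
      ((m : ℝ) + 2 - 2 * Real.cos (Real.pi * j / n)) •
        Sum.elim (Sum.elim v (0 : Fin m → ℝ)) (Sum.elim (0 : Fin m → ℝ) (0 : Fin n → ℝ))) ∧
    (lapNC m n *ᵥ Sum.elim (Sum.elim (0 : Fin n → ℝ) (0 : Fin m → ℝ)) (Sum.elim (0 : Fin m → ℝ) v) =
      ((m : ℝ) + 2 - 2 * Real.cos (Real.pi * j / n)) •
        Sum.elim (Sum.elim (0 : Fin n → ℝ) (0 : Fin m → ℝ)) (Sum.elim (0 : Fin m → ℝ) v)) ∧
    2 ≤ Module.finrank ℝ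
      (Module.End.eigenspace (Matrix.toLin' (lapNC m n))
        ((m : ℝ) + 2 - 2 * Real.cos (Real.pi * j / n))) := by
  set lam : ℝ := 2 - 2 * Real.cos (Real.pi * j / n) with hlamdef
  have hnpos : (0 : ℝ) < n := by positivity
  have hcosne : Real.cos (Real.pi * j / n) ≠ 1 := by
    have hx0 : (0 : ℝ) < Real.pi * j / n := by
      have : (0 : ℝ) < (j : ℝ) := by exact_mod_cast hj1
      positivity
    have hx2 : Real.pi * j / n < 2 * Real.pi := by
      have hj : (j : ℝ) < n := by
        have : j < n := lt_of_le_of_lt hjn (Nat.sub_lt (by omega) one_pos)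
        exact_mod_cast this
      have : Real.pi * j / n < Real.pi := by
        rw [div_lt_iff₀ hnpos]
        have := Real.pi_pos
        nlinarith
      linarith [Real.pi_pos]
    intro h
    rw [Real.cos_eq_one_iff_of_lt_of_lt (by linarith) hx2] at h
    linarith
  have hlamne : lam ≠ 0 := by
    rw [hlamdef]
    intro h
    apply hcosne
    linarith
  have hsum : ∑ i, v i = 0 := sum_eigvec_zero n v lam hlamne hev
  have hJ : JJ m n *ᵥ v = 0 := by
    funext k
    simp [JJ, mulVec, dotProduct, hsum]
  have hmain : (lapP n + (m : ℝ) • 1) *ᵥ v = ((m : ℝ) + lam) • v := by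
    rw [Matrix.add_mulVec, hev, Matrix.smul_mulVec, Matrix.one_mulVec]
    funext i
    simp [smul_eq_mul]
    ring
  have key1 : lapNC m n *ᵥ Sum.elim (Sum.elim v (0 : Fin m → ℝ))
      (Sum.elim (0 : Fin m → ℝ) (0 : Fin n → ℝ)) =
      ((m : ℝ) + lam) • Sum.elim (Sum.elim v (0 : Fin m → ℝ))
      (Sum.elim (0 : Fin m → ℝ) (0 : Fin n → ℝ)) := by
    rw [lapNC, Matrix.fromBlocks_mulVec, Matrix.fromBlocks_mulVec, Matrix.fromBlocks_mulVec]
    funext x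
    rcases x with (x | x) | (x | x) <;>
      simp [Matrix.fromBlocks_mulVec, hmain, Matrix.neg_mulVec, hJ, Matrix.mulVec_zero, hlamdef]
  have key2 : lapNC m n *ᵥ Sum.elim (Sum.elim (0 : Fin n → ℝ) (0 : Fin m → ℝ))
      (Sum.elim (0 : Fin m → ℝ) v) =
      ((m : ℝ) + lam) • Sum.elim (Sum.elim (0 : Fin n → ℝ) (0 : Fin m → ℝ))
      (Sum.elim (0 : Fin m → ℝ) v) := by
    rw [lapNC, Matrix.fromBlocks_mulVec, Matrix.fromBlocks_mulVec, Matrix.fromBlocks_mulVec]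
    funext x
    rcases x with (x | x) | (x | x) <;>
      simp [Matrix.fromBlocks_mulVec, hmain, Matrix.neg_mulVec, hJ, Matrix.mulVec_zero, hlamdef]
  have heq : (m : ℝ) + 2 - 2 * Real.cos (Real.pi * j / n) = (m : ℝ) + lam := by
    rw [hlamdef]; ring
  refine ⟨by rw [heq]; exact key1, by rw [heq]; exact key2, ?_⟩
  -- eigenspace dimension
  set w1 := Sum.elim (Sum.elim v (0 : Fin m → ℝ)) (Sum.elim (0 : Fin m → ℝ) (0 : Fin n → ℝ))
  set w2 := Sum.elim (Sum.elim (0 : Fin n → ℝ) (0 : Fin m → ℝ)) (Sum.elim (0 : Fin m → ℝ) v)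
  set E := Module.End.eigenspace (Matrix.toLin' (lapNC m n)) ((m : ℝ) + 2 - 2 * Real.cos (Real.pi * j / n))
  have hw1 : w1 ∈ E := by
    rw [Module.End.mem_eigenspace_iff, Matrix.toLin'_apply, heq]
    exact key1
  have hw2 : w2 ∈ E := by
    rw [Module.End.mem_eigenspace_iff, Matrix.toLin'_apply, heq]
    exact key2
  obtain ⟨i0, hi0⟩ : ∃ i, v i ≠ 0 := by
    by_contra h
    push_neg at h
    exact hv (funext h)
  have hli : LinearIndependent ℝ ![w1, w2] := by
    rw [LinearIndependent.pair_iff]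
    intro s t hst
    have h1 := congrFun hst (Sum.inl (Sum.inl i0))
    have h2 := congrFun hst (Sum.inr (Sum.inr i0))
    simp [w1, w2] at h1 h2
    constructor
    · rcases h1 with h1 | h1
      · exact h1
      · exact absurd h1 hi0
    · rcases h2 with h2 | h2
      · exact h2
      · exact absurd h2 hi0
  have hspan : Submodule.span ℝ (Set.range ![w1, w2]) ≤ E := by
    rw [Submodule.span_le]
    rintro x hx
    simp only [Set.mem_range] at hx
    obtain ⟨i, rfl⟩ := hx
    fin_cases i
    · exact hw1
    · exact hw2
  calc (2 : ℕ) = Module.finrank ℝ (Submodule.span ℝ (Set.range ![w1, w2])) := by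
        rw [finrank_span_eq_card hli, Fintype.card_fin]
    _ ≤ Module.finrank ℝ E := Submodule.finrank_mono hspan
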